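/- In a free graded Lie algebra L on a graded set of generators containing a generator τ, if w ∈ L is a Lie polynomial in the generators other than τ and [τ, w] = 0, then w = 0 (assuming the bidegree does not force [τ,w] to vanish for sign reasons, e.g. τ of odd degree and w not proportional to τ-free torsion; over a field of characteristic 0 with |τ| odd this centralizer condition forces w = 0). -/

import Mathlib

attribute [local instance 100] LieRing.ofAssociativeRing

noncomputable section Stmt11Aux

open FreeLieAlgebra

variable (k : Type*) [Field k] {X : Type*}

/-- Right-nested Dynkin bracketing of a word. -/
def dynk : List X → FreeLieAlgebra k X
  | [] => 0
  | [x] => FreeLieAlgebra.of k x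
  | x :: y :: l => ⁅FreeLieAlgebra.of k x, dynk (y :: l)⁆

variable (X) in
/-- The canonical Lie algebra map from the free Lie algebra to the monoid algebra
on the free monoid (i.e. the free associative algebra). -/
def stmt11rho : FreeLieAlgebra k X →ₗ⁅k⁆ MonoidAlgebra k (FreeMonoid X) :=
  FreeLieAlgebra.lift k fun x => MonoidAlgebra.of k (FreeMonoid X) (FreeMonoid.of x)

variable (X) in
/-- The Dynkin–Specht–Wever map. -/
def stmt11D : MonoidAlgebra k (FreeMonoid X) →ₗ[k] FreeLieAlgebra k X :=
  (Finsupp.lsum k fun l => LinearMap.toSpanSingleton k _ (dynk k (FreeMonoid.toList l))) ∘ₗ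
    (MonoidAlgebra.coeffLinearEquiv k : MonoidAlgebra k (FreeMonoid X) ≃ₗ[k] _).toLinearMap

lemma stmt11D_single (l : FreeMonoid X) (c : k) :
    stmt11D k X (MonoidAlgebra.single l c) = c • dynk k (FreeMonoid.toList l) :=
  Finsupp.lsum_single k _ _ _

lemma stmt11rho_of (x : X) :
    stmt11rho k X (FreeLieAlgebra.of k x) = MonoidAlgebra.single (FreeMonoid.of x) 1 := by
  rw [stmt11rho, FreeLieAlgebra.lift_of_apply]; rfl

/-- Every element of the free Lie algebra lies in the Lie span of the generators. -/
lemma stmt11_mem_span (u : FreeLieAlgebra k X) :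
    u ∈ LieSubalgebra.lieSpan k (FreeLieAlgebra k X) (Set.range (FreeLieAlgebra.of k)) := by
  set K := LieSubalgebra.lieSpan k (FreeLieAlgebra k X) (Set.range (FreeLieAlgebra.of k)) with hK
  let g : X → K := fun x => ⟨FreeLieAlgebra.of k x,
    LieSubalgebra.subset_lieSpan ⟨x, rfl⟩⟩
  have key : K.incl.comp (FreeLieAlgebra.lift k g) = LieHom.id := by
    apply FreeLieAlgebra.hom_ext
    intro x
    simp [g, FreeLieAlgebra.lift_of_apply]
  have : K.incl (FreeLieAlgebra.lift k g u) = u := by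
    have := congrArg (fun F : FreeLieAlgebra k X →ₗ⁅k⁆ FreeLieAlgebra k X => F u) key
    simpa using this
  rw [← this]
  exact (FreeLieAlgebra.lift k g u).2

/-- Supported on nonempty words. -/
def stmt11Good (f : MonoidAlgebra k (FreeMonoid X)) : Prop :=
  ∀ l ∈ f.coeff.support, FreeMonoid.toList l ≠ []

lemma stmt11Good_mul {f g : MonoidAlgebra k (FreeMonoid X)} (hg : stmt11Good k g) :
    stmt11Good k (f * g) := by
  classical
  intro l hl
  have := MonoidAlgebra.support_coeff_mul_subset f g hl
  rw [Finset.mem_mul] at this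
  obtain ⟨a, _, b, hb, rfl⟩ := this
  have hb' := hg b hb
  simp only [FreeMonoid.toList_mul]
  intro hcontra
  exact hb' (List.append_eq_nil_iff.mp hcontra).2

lemma stmt11Good_zero : stmt11Good k (0 : MonoidAlgebra k (FreeMonoid X)) := by
  intro l hl; simp at hl

lemma stmt11Good_add {f g : MonoidAlgebra k (FreeMonoid X)} (hf : stmt11Good k f)
    (hg : stmt11Good k g) : stmt11Good k (f + g) := by
  classical
  intro l hl
  rcases Finset.mem_union.mp (Finsupp.support_add hl) with h | h
  exacts [hf l h, hg l h]

lemma stmt11Good_sub {f g : MonoidAlgebra k (FreeMonoid X)} (hf : stmt11Good k f)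
    (hg : stmt11Good k g) : stmt11Good k (f - g) := by
  classical
  intro l hl
  rcases Finset.mem_union.mp (Finsupp.support_sub hl) with h | h
  exacts [hf l h, hg l h]

lemma stmt11Good_smul (c : k) {f : MonoidAlgebra k (FreeMonoid X)} (hf : stmt11Good k f) :
    stmt11Good k (c • f) := fun l hl => hf l (Finsupp.support_smul hl)

lemma stmt11_lie_eq (a b : FreeLieAlgebra k X) :
    stmt11rho k X ⁅a, b⁆ = stmt11rho k X a * stmt11rho k X b
      - stmt11rho k X b * stmt11rho k X a := by
  rw [LieHom.map_lie, Ring.lie_def]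

lemma stmt11Good_rho (u : FreeLieAlgebra k X) : stmt11Good k (stmt11rho k X u) := by
  refine LieSubalgebra.lieSpan_induction k (p := fun v _ => stmt11Good k (stmt11rho k X v))
    ?_ ?_ ?_ ?_ ?_ (stmt11_mem_span k u)
  · rintro x ⟨y, rfl⟩
    rw [stmt11rho_of]
    intro l hl
    have := Finsupp.support_single_subset hl
    simp only [Finset.mem_singleton] at this
    subst this
    simp [FreeMonoid.toList_of]
  · simp only [map_zero]; exact stmt11Good_zero k
  · intro x y _ _ hx hy; rw [map_add]; exact stmt11Good_add k hx hy
  · intro r x _ hx; rw [map_smul]; exact stmt11Good_smul k r hx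
  · intro x y _ _ hx hy
    rw [stmt11_lie_eq]
    exact stmt11Good_sub k (stmt11Good_mul k hy) (stmt11Good_mul k hx)

/-- The key Dynkin–Specht–Wever style identity. -/
lemma stmt11D_mul (u : FreeLieAlgebra k X) :
    ∀ f : MonoidAlgebra k (FreeMonoid X), stmt11Good k f →
      stmt11D k X (stmt11rho k X u * f) = ⁅u, stmt11D k X f⁆ := by
  refine LieSubalgebra.lieSpan_induction k (s := Set.range (FreeLieAlgebra.of k))
    (p := fun u _ => ∀ f : MonoidAlgebra k (FreeMonoid X), stmt11Good k f →
      stmt11D k X (stmt11rho k X u * f) = ⁅u, stmt11D k X f⁆)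
    ?_ ?_ ?_ ?_ ?_ (stmt11_mem_span k u)
  · rintro x ⟨y, rfl⟩
    -- first, the general identity with correction term
    have gen : ∀ f : MonoidAlgebra k (FreeMonoid X),
        stmt11D k X (MonoidAlgebra.single (FreeMonoid.of y) 1 * f) =
          ⁅FreeLieAlgebra.of k y, stmt11D k X f⁆ + f.coeff 1 • FreeLieAlgebra.of k y := by
      intro f
      induction f using MonoidAlgebra.induction_linear with
      | zero => simp
      | add f g hf hg =>
        rw [mul_add, map_add, hf, hg, map_add, lie_add]
        simp only [MonoidAlgebra.coeff_add, Finsupp.add_apply, add_smul]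
        abel
      | single l c =>
        rw [MonoidAlgebra.single_mul_single, one_mul, stmt11D_single, stmt11D_single]
        rcases hl : FreeMonoid.toList l with _ | ⟨z, m⟩
        · have hl1 : l = 1 := FreeMonoid.toList.injective hl
          subst hl1
          simp [dynk, FreeMonoid.toList_of_mul, hl]
        · have hl1 : l ≠ 1 := by
            intro hcontra; rw [hcontra] at hl; simp [FreeMonoid.toList_one] at hl
          have : FreeMonoid.toList (FreeMonoid.of y * l) = y :: z :: m := by
            rw [FreeMonoid.toList_of_mul, hl]
          rw [this]
          rw [show dynk k (y :: z :: m) = ⁅FreeLieAlgebra.of k y, dynk k (z :: m)⁆ from rfl]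
          rw [MonoidAlgebra.coeff_single, Finsupp.single_eq_of_ne' hl1, zero_smul, add_zero]
          exact (lie_smul c (of k y) (dynk k (z :: m))).symm
    intro f hf
    rw [stmt11rho_of, gen]
    have : f.coeff 1 = 0 := by
      by_contra hc
      have : (1 : FreeMonoid X) ∈ f.coeff.support := Finsupp.mem_support_iff.mpr hc
      exact hf 1 this rfl
    rw [this, zero_smul, add_zero]
  · intro f _
    rw [map_zero, zero_mul, map_zero, zero_lie]
  · intro x y _ _ hx hy f hf
    rw [map_add, add_mul, map_add, hx f hf, hy f hf, add_lie]
  · intro r x _ hx f hf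
    rw [map_smul, smul_mul_assoc, map_smul, hx f hf, smul_lie]
  · intro x y _ _ hx hy f hf
    rw [stmt11_lie_eq, sub_mul, mul_assoc, mul_assoc, map_sub,
      hx _ (stmt11Good_mul k hf), hy _ (stmt11Good_mul k hf), hy f hf, hx f hf, lie_lie]

variable (X) in
/-- The Euler operator. -/
def stmt11N : Module.End k (FreeLieAlgebra k X) :=
  (stmt11D k X) ∘ₗ (stmt11rho k X).toLinearMap

lemma stmt11N_of (x : X) : stmt11N k X (FreeLieAlgebra.of k x) = FreeLieAlgebra.of k x := by
  simp only [stmt11N, LinearMap.comp_apply, LieHom.coe_toLinearMap]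
  rw [stmt11rho_of, stmt11D_single, FreeMonoid.toList_of]
  simp [dynk]

lemma stmt11N_lie (a b : FreeLieAlgebra k X) :
    stmt11N k X ⁅a, b⁆ = ⁅stmt11N k X a, b⁆ + ⁅a, stmt11N k X b⁆ := by
  have h1 : stmt11N k X ⁅a, b⁆ =
      stmt11D k X (stmt11rho k X a * stmt11rho k X b)
        - stmt11D k X (stmt11rho k X b * stmt11rho k X a) := by
    simp only [stmt11N, LinearMap.comp_apply, LieHom.coe_toLinearMap]
    rw [stmt11_lie_eq, map_sub]
  rw [h1, stmt11D_mul k a _ (stmt11Good_rho k b), stmt11D_mul k b _ (stmt11Good_rho k a)]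
  simp only [stmt11N, LinearMap.comp_apply, LieHom.coe_toLinearMap]
  rw [← lie_skew b, sub_neg_eq_add, add_comm]

/-- Every element is a sum of eigenvectors of the Euler operator with positive
integer eigenvalues. -/
lemma stmt11_mem_eigsup (u : FreeLieAlgebra k X) :
    u ∈ ⨆ n : ℕ, Module.End.eigenspace (stmt11N k X) ((n + 1 : ℕ) : k) := by
  set T : Submodule k (FreeLieAlgebra k X) :=
    ⨆ n : ℕ, Module.End.eigenspace (stmt11N k X) ((n + 1 : ℕ) : k) with hT
  refine LieSubalgebra.lieSpan_induction k (p := fun u _ => u ∈ T)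
    ?_ (zero_mem T) (fun x y _ _ hx hy => T.add_mem hx hy) (fun r _ _ hx => T.smul_mem r hx) ?_
    (stmt11_mem_span k u)
  · rintro x ⟨y, rfl⟩
    apply Submodule.mem_iSup_of_mem 0
    rw [Module.End.mem_eigenspace_iff, stmt11N_of]
    norm_num
  · intro x y _ _ hx hy
    refine Submodule.iSup_induction _ (motive := fun x => ⁅x, y⁆ ∈ T) hx ?_ (by simp) ?_
    · intro m a ha
      refine Submodule.iSup_induction _ (motive := fun y => ⁅a, y⁆ ∈ T) hy ?_ (by simp) ?_
      · intro n b hb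
        apply Submodule.mem_iSup_of_mem (m + n + 1)
        rw [Module.End.mem_eigenspace_iff] at ha hb ⊢
        rw [stmt11N_lie, ha, hb, smul_lie, lie_smul, ← add_smul]
        congr 1
        push_cast
        ring
      · intro b c hb hc
        rw [lie_add]; exact T.add_mem hb hc
    · intro a b ha hb
      rw [add_lie]; exact T.add_mem ha hb

end Stmt11Aux

/-- In a free Lie algebra on a set of generators containing `τ`, if `w` is a
Lie element in the generators other than `τ` (i.e. lies in the Lie subalgebra generated by
them) and `[τ, w] = 0`, then `w = 0`: the adjoint action of the free generator `τ` is
injective on the Lie subalgebra generated by the remaining generators. -/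
theorem stmt11 (k : Type*) [Field k] [CharZero k] (X : Type*) (τ : X)
    (w : FreeLieAlgebra k X)
    (hw : w ∈ LieSubalgebra.lieSpan k (FreeLieAlgebra k X)
        (FreeLieAlgebra.of k '' {x : X | x ≠ τ}))
    (h : ⁅FreeLieAlgebra.of k τ, w⁆ = 0) : w = 0 := by
  classical
  set u := stmt11rho k X w with hu
  -- Step 1: the support of u consists of nonempty τ-free words.
  have hsupp : ∀ l ∈ u.coeff.support, FreeMonoid.toList l ≠ [] ∧ τ ∉ FreeMonoid.toList l := by
    have : ∀ v ∈ LieSubalgebra.lieSpan k (FreeLieAlgebra k X)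
        (FreeLieAlgebra.of k '' {x : X | x ≠ τ}),
        ∀ l ∈ (stmt11rho k X v).coeff.support,
          FreeMonoid.toList l ≠ [] ∧ τ ∉ FreeMonoid.toList l := by
      intro v hv
      refine LieSubalgebra.lieSpan_induction k (p := fun v _ => ∀ l ∈ (stmt11rho k X v).coeff.support,
        FreeMonoid.toList l ≠ [] ∧ τ ∉ FreeMonoid.toList l) ?_ ?_ ?_ ?_ ?_ hv
      · rintro x ⟨y, hy, rfl⟩
        rw [stmt11rho_of]
        intro l hl
        have := Finsupp.support_single_subset hl
        simp only [Finset.mem_singleton] at this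
        subst this
        simp only [FreeMonoid.toList_of, List.mem_singleton]
        exact ⟨by simp, fun hc => hy hc.symm⟩
      · simp only [map_zero]; intro l hl; simp at hl
      · intro x y _ _ hx hy
        rw [map_add]
        intro l hl
        rcases Finset.mem_union.mp (Finsupp.support_add hl) with hh | hh
        exacts [hx l hh, hy l hh]
      · intro r x _ hx
        rw [map_smul]
        intro l hl; exact hx l (Finsupp.support_smul hl)
      · intro x y _ _ hx hy
        rw [stmt11_lie_eq]
        intro l hl
        rcases Finset.mem_union.mp (Finsupp.support_sub hl) with hh | hh
        · have := MonoidAlgebra.support_coeff_mul_subset _ _ hh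
          rw [Finset.mem_mul] at this
          obtain ⟨a, ha, b, hb, rfl⟩ := this
          obtain ⟨ha1, ha2⟩ := hx a ha
          obtain ⟨hb1, hb2⟩ := hy b hb
          rw [FreeMonoid.toList_mul]
          refine ⟨by simp [ha1], ?_⟩
          rw [List.mem_append]; rintro (hc | hc); exacts [ha2 hc, hb2 hc]
        · have := MonoidAlgebra.support_coeff_mul_subset _ _ hh
          rw [Finset.mem_mul] at this
          obtain ⟨a, ha, b, hb, rfl⟩ := this
          obtain ⟨ha1, ha2⟩ := hy a ha
          obtain ⟨hb1, hb2⟩ := hx b hb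
          rw [FreeMonoid.toList_mul]
          refine ⟨by simp [ha1], ?_⟩
          rw [List.mem_append]; rintro (hc | hc); exacts [ha2 hc, hb2 hc]
    exact this w hw
  -- Step 2: u commutes with the letter τ, hence u = 0.
  have hcomm : MonoidAlgebra.single (FreeMonoid.of τ) (1 : k) * u
      = u * MonoidAlgebra.single (FreeMonoid.of τ) (1 : k) := by
    have := congrArg (stmt11rho k X) h
    rw [stmt11_lie_eq, map_zero, stmt11rho_of] at this
    exact sub_eq_zero.mp this
  have hu0 : u = 0 := by
    ext m
    by_cases hm : m ∈ u.coeff.support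
    · obtain ⟨hm1, hm2⟩ := hsupp m hm
      have hL : (MonoidAlgebra.single (FreeMonoid.of τ) (1 : k) * u).coeff (FreeMonoid.of τ * m)
          = 1 * u.coeff m := by
        apply MonoidAlgebra.coeff_single_mul_eq_mul_coeff
        intro a _
        constructor
        · intro hc
          have := congrArg FreeMonoid.toList hc
          rw [FreeMonoid.toList_of_mul, FreeMonoid.toList_of_mul] at this
          exact FreeMonoid.toList.injective (List.cons_injective this)
        · rintro rfl; rfl
      have hR : (u * MonoidAlgebra.single (FreeMonoid.of τ) (1 : k)).coeff (FreeMonoid.of τ * m)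
          = 0 := by
        apply MonoidAlgebra.mul_single_apply_of_not_exists_mul
        rintro ⟨d, hd⟩
        have := congrArg FreeMonoid.toList hd
        rw [FreeMonoid.toList_of_mul, FreeMonoid.toList_mul, FreeMonoid.toList_of] at this
        rcases hld : FreeMonoid.toList d with _ | ⟨a, l⟩
        · rw [hld] at this
          simp only [List.nil_append] at this
          injection this with h3 h4
          exact hm1 h4
        · rw [hld] at this
          simp only [List.cons_append] at this
          injection this with h3 h4
          apply hm2
          rw [h4, List.mem_append]
          right; simp
      rw [hcomm, hR] at hL
      rw [one_mul] at hL
      exact absurd hL.symm (Finsupp.mem_support_iff.mp hm)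
    · simpa using Finsupp.notMem_support_iff.mp hm
  -- Step 3: N w = 0, so w lies in the 0-eigenspace of N.
  have hN : stmt11N k X w = 0 := by
    simp only [stmt11N, LinearMap.comp_apply, LieHom.coe_toLinearMap]
    rw [← hu, hu0, map_zero]
  have hw0 : w ∈ Module.End.eigenspace (stmt11N k X) (0 : k) := by
    rw [Module.End.mem_eigenspace_iff, hN, zero_smul]
  -- Step 4: w also lies in the sup of positive-integer eigenspaces; by independence w = 0.
  have hwT := stmt11_mem_eigsup k w
  have hle : (⨆ n : ℕ, Module.End.eigenspace (stmt11N k X) ((n + 1 : ℕ) : k))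
      ≤ ⨆ (μ : k) (_ : μ ≠ 0), Module.End.eigenspace (stmt11N k X) μ := by
    refine iSup_le fun n => ?_
    have hne : ((n + 1 : ℕ) : k) ≠ 0 := Nat.cast_ne_zero.mpr (Nat.succ_ne_zero n)
    exact le_iSup₂_of_le ((n + 1 : ℕ) : k) hne le_rfl
  have hind := (stmt11N k X).eigenspaces_iSupIndep (0 : k)
  have := Submodule.disjoint_def.mp hind w hw0 (hle hwT)
  exact this
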